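/- arXiv:2406.06429 — 3 statements merged into one kernel-verified Lean document; each statement's English description precedes it below -/
import Mathlib

section
/- Let F : 𝔽₂ⁿ → 𝔽₂^m be a vectorial Boolean function. Then Σ_{λ ∈ 𝔽₂^m} 𝔉(F_λ)² ≥ 2^{n+m}, and equality holds if and only if m ≥ n and F is an embedding (i.e., injective). -/
/-- The vector space 𝔽₂ⁿ. -/
abbrev BV (n : ℕ) := Fin n → ZMod 2

/-- First-order derivative of a Boolean function: `D_a f (x) = f (x + a) + f x`. -/
def bderiv {n : ℕ} (f : BV n → ZMod 2) (a : BV n) : BV n → ZMod 2 :=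
  fun x => f (x + a) + f x

/-- Weight of a Boolean function: the number of inputs mapped to 1. -/
noncomputable def bwt {n : ℕ} (f : BV n → ZMod 2) : ℕ := {x | f x = 1}.ncard

/-- `𝔉(f) = Σ_x (-1)^(f x)`. -/
def fou {n : ℕ} (f : BV n → ZMod 2) : ℤ := ∑ x : BV n, (-1 : ℤ) ^ (f x).val

/-- Component function `F_λ(x) = λ · F(x)` (dot product over 𝔽₂). -/
def cmpnt {n m : ℕ} (F : BV n → BV m) (l : BV m) : BV n → ZMod 2 :=
  fun x => ∑ i, l i * F x i

/-- A Boolean function on n variables is balanced if its weight is `2^(n-1)`. -/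
def IsBalanced {n : ℕ} (f : BV n → ZMod 2) : Prop := bwt f = 2 ^ (n - 1)

lemma neg_one_pow_add (a b : ZMod 2) :
    (-1 : ℤ) ^ (a + b).val = (-1) ^ a.val * (-1) ^ b.val := by
  revert a b; decide

lemma neg_one_pow_add_one (a : ZMod 2) :
    (-1 : ℤ) ^ (a + 1).val = -(-1) ^ a.val := by
  revert a; decide

lemma card_BV (m : ℕ) : Fintype.card (BV m) = 2 ^ m := by
  simp [Fintype.card_fun]

lemma char_sum (m : ℕ) (v : BV m) :
    ∑ l : BV m, (-1 : ℤ) ^ ((∑ i, l i * v i).val) = if v = 0 then 2 ^ m else 0 := by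
  by_cases hv : v = 0
  · subst hv
    simp [Finset.sum_const, card_BV]
  · simp only [hv, if_false]
    obtain ⟨i0, hi0⟩ : ∃ i0, v i0 ≠ 0 := by
      by_contra h
      push_neg at h
      exact hv (funext h)
    have hv1 : v i0 = 1 := by
      revert hi0; generalize v i0 = a; revert a; decide
    set g : BV m → BV m := fun l => Function.update l i0 (l i0 + 1) with hg
    have key : ∀ l : BV m, (∑ i, g l i * v i) = (∑ i, l i * v i) + 1 := by
      intro l
      have h1 : ∀ i, g l i * v i = Function.update (fun i => l i * v i) i0 (l i0 + 1) i := by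
        intro i
        by_cases h : i = i0
        · subst h; simp [g, hv1]
        · simp [g, Function.update_of_ne h]
      rw [Finset.sum_congr rfl (fun i _ => h1 i)]
      rw [Finset.sum_update_of_mem (Finset.mem_univ i0),
        ← Finset.add_sum_erase _ _ (Finset.mem_univ i0), hv1, mul_one,
        Finset.sdiff_singleton_eq_erase]
      ring
    refine Finset.sum_ninvolution g (fun l => ?_) (fun l h => ?_) (fun l => Finset.mem_univ _)
      (fun l => ?_)
    · rw [key, neg_one_pow_add_one]; ring
    · intro heq
      have h2 : g l i0 = l i0 := congrFun heq i0
      simp only [g, Function.update_self] at h2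
      revert h2; generalize l i0 = a; revert a; decide
    · funext i
      by_cases h : i = i0
      · subst h
        simp only [g, Function.update_self]
        have h3 : ∀ a : ZMod 2, a + 1 + 1 = a := by decide
        exact h3 _
      · simp [g, Function.update_of_ne h]

/-- Σ_{λ ∈ 𝔽₂^m} 𝔉(F_λ)² ≥ 2^(n+m), with equality iff m ≥ n and F is an embedding. -/
theorem square_fourier_vectorial (n m : ℕ) (F : BV n → BV m) :
    (2 : ℤ) ^ (n + m) ≤ ∑ l : BV m, (fou (cmpnt F l)) ^ 2
    ∧ ((∑ l : BV m, (fou (cmpnt F l)) ^ 2 = (2 : ℤ) ^ (n + m))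
        ↔ (n ≤ m ∧ Function.Injective F)) := by
  classical
  have e1 : ∀ l : BV m, (fou (cmpnt F l)) ^ 2
      = ∑ x : BV n, ∑ y : BV n, (-1 : ℤ) ^ ((∑ i, l i * (F x i + F y i)).val) := by
    intro l
    rw [sq, fou, Finset.sum_mul_sum]
    refine Finset.sum_congr rfl fun x _ => Finset.sum_congr rfl fun y _ => ?_
    rw [← neg_one_pow_add]
    congr 1
    show ((cmpnt F l x + cmpnt F l y).val) = _
    congr 1
    simp only [cmpnt, ← Finset.sum_add_distrib, mul_add]
  have step1 : ∑ l : BV m, (fou (cmpnt F l)) ^ 2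
      = ∑ x : BV n, ∑ y : BV n, (if F x = F y then (2 : ℤ) ^ m else 0) := by
    rw [Finset.sum_congr rfl (fun l _ => e1 l), Finset.sum_comm]
    refine Finset.sum_congr rfl fun x _ => ?_
    rw [Finset.sum_comm]
    refine Finset.sum_congr rfl fun y _ => ?_
    rw [char_sum m (fun i => F x i + F y i)]
    have h2 : ∀ a b : ZMod 2, a + b = 0 ↔ a = b := by decide
    congr 1
    refine propext ⟨fun h => funext fun i => (h2 _ _).mp (congrFun h i),
      fun h => funext fun i => (h2 _ _).mpr (congrFun h i)⟩
  -- counting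
  set T : BV n → Finset (BV n) := fun x => Finset.univ.filter (fun y => F x = F y) with hT
  have step2 : ∑ l : BV m, (fou (cmpnt F l)) ^ 2
      = ∑ x : BV n, ((T x).card : ℤ) * 2 ^ m := by
    rw [step1]
    refine Finset.sum_congr rfl fun x _ => ?_
    rw [← Finset.sum_filter, Finset.sum_const, nsmul_eq_mul]
  have hmem : ∀ x : BV n, x ∈ T x := fun x => by simp [hT]
  have hcard : ∀ x : BV n, 1 ≤ (T x).card := fun x => Finset.card_pos.mpr ⟨x, hmem x⟩
  have hdiff : ∑ x : BV n, ((T x).card : ℤ) * 2 ^ m - 2 ^ (n + m)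
      = ∑ x : BV n, (((T x).card : ℤ) - 1) * 2 ^ m := by
    rw [eq_comm]
    simp only [sub_mul, one_mul, Finset.sum_sub_distrib, Finset.sum_const,
      Finset.card_univ, card_BV, nsmul_eq_mul]
    push_cast
    ring
  have hnonneg : ∀ x ∈ Finset.univ, (0 : ℤ) ≤ (((T x).card : ℤ) - 1) * 2 ^ m := by
    intro x _
    have h1 : (1 : ℤ) ≤ ((T x).card : ℤ) := by exact_mod_cast hcard x
    have h2 : (0 : ℤ) < 2 ^ m := by positivity
    nlinarith
  constructor
  · nlinarith [Finset.sum_nonneg hnonneg, hdiff, step2]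
  · rw [step2]
    constructor
    · intro heq
      have hzero : ∑ x : BV n, (((T x).card : ℤ) - 1) * 2 ^ m = 0 := by
        rw [← hdiff, heq]; ring
      have hall : ∀ x ∈ Finset.univ, (((T x).card : ℤ) - 1) * 2 ^ m = 0 :=
        (Finset.sum_eq_zero_iff_of_nonneg hnonneg).mp hzero
      have hone : ∀ x : BV n, (T x).card = 1 := by
        intro x
        have := hall x (Finset.mem_univ x)
        have h2 : (2 : ℤ) ^ m ≠ 0 := by positivity
        have : ((T x).card : ℤ) - 1 = 0 := by
          rcases mul_eq_zero.mp this with h | h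
          · exact h
          · exact absurd h h2
        have : ((T x).card : ℤ) = 1 := by linarith
        exact_mod_cast this
      have hinj : Function.Injective F := by
        intro a b hab
        have ha : a ∈ T a := hmem a
        have hb : b ∈ T a := by simp [hT, hab]
        obtain ⟨c, hc⟩ := Finset.card_eq_one.mp (hone a)
        rw [hc] at ha hb
        simp only [Finset.mem_singleton] at ha hb
        rw [ha, hb]
      refine ⟨?_, hinj⟩
      have := Fintype.card_le_of_injective F hinj
      rw [card_BV, card_BV] at this
      exact (Nat.pow_le_pow_iff_right (by norm_num)).mp this
    · rintro ⟨-, hinj⟩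
      have hone : ∀ x : BV n, T x = {x} := by
        intro x
        ext y
        simp only [hT, Finset.mem_filter, Finset.mem_univ, true_and, Finset.mem_singleton]
        constructor
        · intro h; exact hinj h.symm
        · rintro rfl; rfl
      simp only [fun x => hone x, Finset.card_singleton, Nat.cast_one, one_mul,
        Finset.sum_const, Finset.card_univ, card_BV, nsmul_eq_mul, pow_add]
      push_cast
      ring
end

section
/- Let F : 𝔽₂ⁿ → 𝔽₂^m be a vectorial Boolean function with m ≥ n. Then Σ_{λ ∈ 𝔽₂^m, λ ≠ 0} Σ_{a ∈ 𝔽₂ⁿ} wt(D_a F_λ) ≤ 2^{2n-1}·(2^m − 2^{m-n}), and equality holds if and only if F is an embedding (i.e., injective). -/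
open Finset

lemma bv_add_eq_zero {m : ℕ} (u w : BV m) : u + w = 0 ↔ u = w := by
  constructor
  · intro h; funext i
    have h2 : ∀ a b : ZMod 2, a + b = 0 → a = b := by decide
    exact h2 _ _ (congrFun h i)
  · rintro rfl; funext i
    have : ∀ a : ZMod 2, a + a = 0 := by decide
    exact this _

lemma bwt_eq_card {n : ℕ} (f : BV n → ZMod 2) :
    bwt f = (univ.filter fun x => f x = 1).card := by
  rw [bwt, Set.ncard_eq_toFinset_card', Set.toFinset_setOf]

lemma dot_card {m : ℕ} (v : BV m) (hv : v ≠ 0) :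
    ((univ : Finset (BV m)).filter fun l => (∑ i, l i * v i) = 1).card = 2 ^ (m - 1) := by
  obtain ⟨j, hj⟩ := Function.ne_iff.mp hv
  have hone : ∀ u : ZMod 2, u ≠ (0 : ZMod 2) → u = 1 := by decide
  have hvj : v j = 1 := hone _ (by simpa using hj)
  obtain ⟨e, hde⟩ : ∃ e : BV m, (∑ i, e i * v i) = 1 := by
    refine ⟨Pi.single j 1, ?_⟩
    rw [Finset.sum_eq_single j]
    · simp [hvj]
    · intro i _ hij; simp [Pi.single_eq_of_ne hij]
    · intro h; exact absurd (Finset.mem_univ j) h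
  have haddsum : ∀ l : BV m, (∑ i, (l + e) i * v i) = (∑ i, l i * v i) + 1 := by
    intro l
    conv_rhs => rw [← hde]
    rw [← Finset.sum_add_distrib]
    exact Finset.sum_congr rfl fun i _ => by rw [Pi.add_apply, add_mul]
  have hEE : ∀ l : BV m, l + e + e = l := by
    intro l; funext i
    have h3 : ∀ a b : ZMod 2, a + b + b = a := by decide
    simp only [Pi.add_apply]; exact h3 _ _
  have hbij : ((univ : Finset (BV m)).filter fun l => (∑ i, l i * v i) = 1).card
      = ((univ : Finset (BV m)).filter fun l => (∑ i, l i * v i) = 0).card := by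
    apply Finset.card_bij' (fun l _ => l + e) (fun l _ => l + e)
    · intro l hl
      simp only [Finset.mem_filter, Finset.mem_univ, true_and] at hl ⊢
      rw [haddsum, hl]; decide
    · intro l hl
      simp only [Finset.mem_filter, Finset.mem_univ, true_and] at hl ⊢
      rw [haddsum, hl]; decide
    · intro l _; exact hEE l
    · intro l _; exact hEE l
  have hneg : ((univ : Finset (BV m)).filter fun l => ¬ (∑ i, l i * v i) = 1)
      = ((univ : Finset (BV m)).filter fun l => (∑ i, l i * v i) = 0) := by
    apply Finset.filter_congr
    intro l _
    constructor
    · intro h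
      have h4 : ∀ u : ZMod 2, u ≠ 1 → u = 0 := by decide
      exact h4 _ h
    · intro h h1; rw [h] at h1; exact absurd h1 (by decide)
  have htot := Finset.card_filter_add_card_filter_not
    (s := (univ : Finset (BV m))) (p := fun l : BV m => (∑ i, l i * v i) = 1)
  rw [hneg, ← hbij, Finset.card_univ] at htot
  have hcard : Fintype.card (BV m) = 2 ^ m := by simp
  have hm : 1 ≤ m := j.pos
  have h2 : 2 ^ m = 2 ^ (m-1) + 2 ^ (m-1) := by
    have hh : m - 1 + 1 = m := Nat.succ_pred_eq_of_pos hm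
    conv_lhs => rw [← hh]
    rw [pow_succ, mul_two]
  rw [← two_mul, hcard, h2, ← two_mul] at htot
  exact Nat.eq_of_mul_eq_mul_left (by norm_num) htot

lemma lambda_sum {m : ℕ} (v : BV m) :
    (∑ l ∈ (univ : Finset (BV m)).filter (fun l => l ≠ 0),
      if (∑ i, l i * v i) = 1 then (1:ℕ) else 0)
    = if v = 0 then 0 else 2 ^ (m - 1) := by
  by_cases hv : v = 0
  · subst hv
    rw [if_pos rfl]
    apply Finset.sum_eq_zero
    intro l _
    rw [if_neg]
    intro h
    rw [show (∑ i, l i * (0 : BV m) i) = 0 from by simp] at h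
    exact absurd h (by decide)
  · rw [if_neg hv, Finset.sum_boole, Finset.filter_filter]
    have heq : ((univ : Finset (BV m)).filter fun l => l ≠ 0 ∧ (∑ i, l i * v i) = 1)
        = (univ : Finset (BV m)).filter fun l => (∑ i, l i * v i) = 1 := by
      apply Finset.filter_congr
      intro l _
      constructor
      · exact fun h => h.2
      · intro h
        refine ⟨?_, h⟩
        rintro rfl
        rw [show (∑ i, (0:BV m) i * v i) = 0 from by simp] at h
        exact absurd h (by decide)
    rw [heq, dot_card v hv]
    simp

/-- For m ≥ n, Σ_{λ ≠ 0} Σ_a wt(D_a F_λ) ≤ 2^(2n-1)·(2^m − 2^(m-n)),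
    with equality iff F is an embedding. -/
theorem sum_weight_derivatives_vBf (n m : ℕ) (hn : 1 ≤ n) (hnm : n ≤ m)
    (F : BV n → BV m) :
    (∑ l ∈ Finset.univ.filter (fun l : BV m => l ≠ 0),
        ∑ a : BV n, bwt (bderiv (cmpnt F l) a))
      ≤ 2 ^ (2 * n - 1) * (2 ^ m - 2 ^ (m - n))
    ∧ ((∑ l ∈ Finset.univ.filter (fun l : BV m => l ≠ 0),
          ∑ a : BV n, bwt (bderiv (cmpnt F l) a))
        = 2 ^ (2 * n - 1) * (2 ^ m - 2 ^ (m - n))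
      ↔ Function.Injective F) := by
  have hcardBV : Fintype.card (BV n) = 2 ^ n := by simp
  -- d x : number of y with F y ≠ F x ; c x : number of y with F y = F x
  have hdot : ∀ (l : BV m) (x y : BV n),
      cmpnt F l y + cmpnt F l x = ∑ i, l i * (F y + F x) i := by
    intro l x y
    rw [cmpnt, cmpnt, ← Finset.sum_add_distrib]
    exact Finset.sum_congr rfl fun i _ => by rw [Pi.add_apply, mul_add]
  have hS : (∑ l ∈ Finset.univ.filter (fun l : BV m => l ≠ 0),
        ∑ a : BV n, bwt (bderiv (cmpnt F l) a))
      = 2 ^ (m - 1) * ∑ x : BV n, ((univ : Finset (BV n)).filter fun y => ¬ F y = F x).card := by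
    have step1 : ∀ l : BV m, (∑ a : BV n, bwt (bderiv (cmpnt F l) a))
        = ∑ x : BV n, ∑ y : BV n,
            (if cmpnt F l y + cmpnt F l x = 1 then (1:ℕ) else 0) := by
      intro l
      have hterm : ∀ a : BV n, bwt (bderiv (cmpnt F l) a)
          = ∑ x : BV n, (if cmpnt F l (x + a) + cmpnt F l x = 1 then (1:ℕ) else 0) := by
        intro a
        rw [bwt_eq_card, Finset.card_filter]
        rfl
      rw [Finset.sum_congr rfl fun a _ => hterm a, Finset.sum_comm]
      refine Finset.sum_congr rfl fun x _ => ?_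
      exact Fintype.sum_equiv (Equiv.addLeft x) _ _ (fun a => rfl)
    rw [Finset.sum_congr rfl fun l _ => step1 l, Finset.sum_comm]
    have step2 : ∀ x : BV n,
        (∑ l ∈ Finset.univ.filter (fun l : BV m => l ≠ 0),
          ∑ y : BV n, (if cmpnt F l y + cmpnt F l x = 1 then (1:ℕ) else 0))
        = ∑ y : BV n, (if F y = F x then 0 else 2 ^ (m - 1)) := by
      intro x
      rw [Finset.sum_comm]
      refine Finset.sum_congr rfl fun y _ => ?_
      calc (∑ l ∈ Finset.univ.filter (fun l : BV m => l ≠ 0),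
              (if cmpnt F l y + cmpnt F l x = 1 then (1:ℕ) else 0))
          = ∑ l ∈ Finset.univ.filter (fun l : BV m => l ≠ 0),
              (if (∑ i, l i * (F y + F x) i) = 1 then (1:ℕ) else 0) :=
            Finset.sum_congr rfl fun l _ => by rw [hdot l x y]
        _ = if F y + F x = 0 then 0 else 2 ^ (m - 1) := lambda_sum _
        _ = if F y = F x then 0 else 2 ^ (m - 1) := by
              by_cases hfe : F y = F x
              · rw [if_pos ((bv_add_eq_zero _ _).mpr hfe), if_pos hfe]
              · rw [if_neg (fun h => hfe ((bv_add_eq_zero _ _).mp h)), if_neg hfe]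
    rw [Finset.sum_congr rfl fun x _ => step2 x, Finset.mul_sum]
    refine Finset.sum_congr rfl fun x _ => ?_
    rw [Finset.sum_ite, Finset.sum_const, Finset.sum_const, smul_eq_mul,
      smul_eq_mul, mul_zero, zero_add, mul_comm]
  have hc1 : ∀ x : BV n,
      1 ≤ ((univ : Finset (BV n)).filter fun y => F y = F x).card := by
    intro x
    exact Finset.card_pos.mpr ⟨x, by simp⟩
  have hdc : ∀ x : BV n,
      ((univ : Finset (BV n)).filter fun y => F y = F x).card
      + ((univ : Finset (BV n)).filter fun y => ¬ F y = F x).card = 2 ^ n := by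
    intro x
    rw [Finset.card_filter_add_card_filter_not, Finset.card_univ, hcardBV]
  have hdle : ∀ x : BV n,
      ((univ : Finset (BV n)).filter fun y => ¬ F y = F x).card ≤ 2 ^ n - 1 := by
    intro x
    have h1 := hdc x
    have h2 := hc1 x
    generalize ((univ : Finset (BV n)).filter fun y => F y = F x).card = C at h1 h2
    generalize ((univ : Finset (BV n)).filter fun y => ¬ F y = F x).card = D at h1 ⊢
    omega
  have hT : 2 ^ (2 * n - 1) * (2 ^ m - 2 ^ (m - n))
      = 2 ^ (m - 1) * (2 ^ n * (2 ^ n - 1)) := by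
    have e1 : (2:ℕ) ^ m - 2 ^ (m - n) = 2 ^ (m - n) * (2 ^ n - 1) := by
      rw [Nat.mul_sub, mul_one, ← pow_add]
      have : m - n + n = m := by omega
      rw [this]
    rw [e1, ← mul_assoc, ← pow_add, ← mul_assoc, ← pow_add]
    have : 2 * n - 1 + (m - n) = m - 1 + n := by omega
    rw [this]
  have hXle : (∑ x : BV n, ((univ : Finset (BV n)).filter fun y => ¬ F y = F x).card)
      ≤ 2 ^ n * (2 ^ n - 1) := by
    calc (∑ x : BV n, ((univ : Finset (BV n)).filter fun y => ¬ F y = F x).card)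
        ≤ ∑ _x : BV n, (2 ^ n - 1) := Finset.sum_le_sum fun x _ => hdle x
      _ = 2 ^ n * (2 ^ n - 1) := by
          rw [Finset.sum_const, Finset.card_univ, hcardBV, smul_eq_mul]
  constructor
  · rw [hS, hT]
    exact Nat.mul_le_mul_left _ hXle
  · rw [hS, hT]
    constructor
    · intro h
      have hX : (∑ x : BV n, ((univ : Finset (BV n)).filter fun y => ¬ F y = F x).card)
          = 2 ^ n * (2 ^ n - 1) :=
        Nat.eq_of_mul_eq_mul_left (by positivity) h
      have hall : ∀ x : BV n,
          ((univ : Finset (BV n)).filter fun y => ¬ F y = F x).card = 2 ^ n - 1 := by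
        by_contra hcon
        push_neg at hcon
        obtain ⟨x0, hx0⟩ := hcon
        have hlt : ((univ : Finset (BV n)).filter fun y => ¬ F y = F x0).card < 2 ^ n - 1 :=
          lt_of_le_of_ne (hdle x0) hx0
        have hstrict : (∑ x : BV n, ((univ : Finset (BV n)).filter fun y => ¬ F y = F x).card)
            < ∑ _x : BV n, (2 ^ n - 1) :=
          Finset.sum_lt_sum (fun x _ => hdle x) ⟨x0, Finset.mem_univ _, hlt⟩
        rw [Finset.sum_const, Finset.card_univ, hcardBV, smul_eq_mul, hX] at hstrict
        exact lt_irrefl _ hstrict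
      intro a b hab
      have hcb : ((univ : Finset (BV n)).filter fun y => F y = F b).card = 1 := by
        have h1 := hdc b
        have h2 := hc1 b
        have h3 := hall b
        generalize ((univ : Finset (BV n)).filter fun y => F y = F b).card = C at h1 h2 ⊢
        generalize ((univ : Finset (BV n)).filter fun y => ¬ F y = F b).card = D at h1 h3
        omega
      exact Finset.card_le_one.mp (le_of_eq hcb) a (by simp [hab]) b (by simp)
    · intro hinj
      have hall : ∀ x : BV n,
          ((univ : Finset (BV n)).filter fun y => ¬ F y = F x).card = 2 ^ n - 1 := by
        intro x
        have hcx : ((univ : Finset (BV n)).filter fun y => F y = F x).card = 1 := by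
          have : ((univ : Finset (BV n)).filter fun y => F y = F x) = {x} := by
            ext y
            simp [hinj.eq_iff]
          rw [this, Finset.card_singleton]
        have h1 := hdc x
        generalize ((univ : Finset (BV n)).filter fun y => F y = F x).card = C at h1 hcx
        generalize ((univ : Finset (BV n)).filter fun y => ¬ F y = F x).card = D at h1 ⊢
        omega
      rw [Finset.sum_congr rfl fun x _ => hall x, Finset.sum_const, Finset.card_univ,
        hcardBV, smul_eq_mul]
end

section
/- Let n be even, m ≥ n + 1, and let F : 𝔽₂ⁿ → 𝔽₂^m be an embedding (i.e., injective) such that every nontrivial component F_λ (λ ≠ 0) is partially-bent. Then |B(F)| ≥ 2ⁿ − 1, and equality holds if and only if for every λ ≠ 0 with F_λ unbalanced, F_λ is bent (equivalently, V(F_λ) = {0}). -/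
open Finset


def chi (a : ZMod 2) : ℤ := (-1) ^ a.val

lemma chi_add : ∀ a b : ZMod 2, chi (a + b) = chi a * chi b := by decide

lemma chi_eq : ∀ a : ZMod 2, chi a = 1 - 2 * (if a = 1 then 1 else 0) := by decide

example (n : ℕ) : Fintype.card (BV n) = 2 ^ n := by
  simp [Fintype.card_fun]

example : ∀ c : ZMod 2, (∑ b : ZMod 2, chi (b * c)) = if c = 0 then 2 else 0 := by decide

example : ∀ p q c : ZMod 2, p + q = c → p = q + c := by decide

lemma chi_sum {ι : Type*} (s : Finset ι) (g : ι → ZMod 2) :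
    chi (∑ i ∈ s, g i) = ∏ i ∈ s, chi (g i) := by
  induction s using Finset.cons_induction with
  | empty => simp [chi]
  | cons i s hi ih => rw [Finset.sum_cons, Finset.prod_cons, chi_add, ih]

example {n : ℕ} (f : BV n → ZMod 2) (x : BV n) :
    (∑ a : BV n, chi (f (x + a))) = ∑ y : BV n, chi (f y) :=
  Equiv.sum_comp (Equiv.addLeft x) (fun y => chi (f y))


lemma fou_def {n : ℕ} (f : BV n → ZMod 2) : fou f = ∑ x : BV n, chi (f x) := rfl

lemma bwt_eq {n : ℕ} (f : BV n → ZMod 2) :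
    bwt f = (univ.filter (fun x => f x = 1)).card := by
  rw [bwt, Set.ncard_eq_toFinset_card']
  simp [Set.toFinset_setOf]

lemma fou_eq {n : ℕ} (f : BV n → ZMod 2) : fou f = 2 ^ n - 2 * (bwt f : ℤ) := by
  rw [fou_def, bwt_eq]
  calc ∑ x : BV n, chi (f x)
      = ∑ x : BV n, (1 - 2 * (if f x = 1 then 1 else 0)) := by
        exact Finset.sum_congr rfl fun x _ => chi_eq (f x)
    _ = 2 ^ n - 2 * ((univ.filter (fun x => f x = 1)).card : ℤ) := by
        rw [Finset.sum_sub_distrib, Finset.sum_const, ← Finset.mul_sum, Finset.sum_boole]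
        simp [Fintype.card_fun]

lemma balanced_iff_fou {n : ℕ} (hn : 1 ≤ n) (f : BV n → ZMod 2) :
    IsBalanced f ↔ fou f = 0 := by
  rw [IsBalanced, fou_eq]
  have h : (2:ℤ) ^ n = 2 * 2 ^ (n - 1) := by
    rw [← pow_succ']
    congr 1
    omega
  constructor
  · intro hb; rw [hb]; push_cast [h]; ring
  · intro h0
    have : (bwt f : ℤ) = 2 ^ (n-1) := by linarith [h]
    exact_mod_cast this

lemma fou_sq {n : ℕ} (f : BV n → ZMod 2) : fou f ^ 2 = ∑ a : BV n, fou (bderiv f a) := by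
  have h1 : ∀ x : BV n, (∑ a : BV n, chi (f (x + a))) = fou f := fun x =>
    Equiv.sum_comp (Equiv.addLeft x) (fun y => chi (f y))
  calc fou f ^ 2 = fou f * fou f := sq (fou f)
    _ = ∑ x : BV n, fou f * chi (f x) := by rw [← Finset.mul_sum, fou_def]
    _ = ∑ x : BV n, (∑ a : BV n, chi (f (x + a))) * chi (f x) := by
        exact Finset.sum_congr rfl fun x _ => by rw [h1]
    _ = ∑ x : BV n, ∑ a : BV n, chi (f (x + a)) * chi (f x) := by
        simp [Finset.sum_mul]
    _ = ∑ a : BV n, ∑ x : BV n, chi (f (x + a)) * chi (f x) := Finset.sum_comm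
    _ = ∑ a : BV n, fou (bderiv f a) := by
        refine Finset.sum_congr rfl fun a _ => ?_
        rw [fou_def]
        exact Finset.sum_congr rfl fun x _ => by rw [bderiv, chi_add]

lemma fou_zero_fn {n : ℕ} : fou (fun _ : BV n => (0 : ZMod 2)) = 2 ^ n := by
  rw [fou_def]
  simp [chi, Fintype.card_fun]

lemma bderiv_zero {n : ℕ} (f : BV n → ZMod 2) : bderiv f 0 = fun _ => 0 := by
  funext x
  have : ∀ p : ZMod 2, p + p = 0 := by decide
  simp [bderiv, this]

lemma deriv_const_zero {n : ℕ} (f : BV n → ZMod 2) (hf : fou f ≠ 0) (a : BV n)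
    (c : ZMod 2) (hc : ∀ x, bderiv f a x = c) : c = 0 := by
  have key : ∀ p q c : ZMod 2, p + q = c → p = q + c := by decide
  have h1 : fou f = chi c * fou f := by
    calc fou f = ∑ x : BV n, chi (f (x + a)) :=
          (Equiv.sum_comp (Equiv.addRight a) (fun y => chi (f y))).symm
      _ = ∑ x : BV n, chi (f x + c) :=
          Finset.sum_congr rfl fun x _ => by rw [key _ _ _ (hc x)]
      _ = ∑ x : BV n, chi c * chi (f x) :=
          Finset.sum_congr rfl fun x _ => by rw [chi_add, mul_comm]
      _ = chi c * fou f := by rw [← Finset.mul_sum, fou_def]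
  have hcc : ∀ c : ZMod 2, c = 0 ∨ c = 1 := by decide
  rcases hcc c with h | h
  · exact h
  · exfalso
    rw [h] at h1
    have : chi 1 = -1 := rfl
    rw [this] at h1
    apply hf
    linarith

lemma unbal_main {n : ℕ} (hn : 1 ≤ n) (g : BV n → ZMod 2) (hg : ¬ IsBalanced g)
    (hpb : ∀ a : BV n, (∃ c, ∀ x, bderiv g a x = c) ∨ IsBalanced (bderiv g a)) :
    (2:ℤ) ^ n ≤ fou g ^ 2 ∧
      (fou g ^ 2 = 2 ^ n ↔ ∀ a : BV n, a ≠ 0 → IsBalanced (bderiv g a)) := by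
  have hf0 : fou g ≠ 0 := fun h => hg ((balanced_iff_fou hn g).mpr h)
  have hmem : ∀ a : BV n, fou (bderiv g a) = 0 ∨ fou (bderiv g a) = 2 ^ n := by
    intro a
    rcases hpb a with ⟨c, hc⟩ | hb
    · right
      have hc0 := deriv_const_zero g hf0 a c hc
      have : bderiv g a = fun _ => 0 := funext fun x => by rw [hc x, hc0]
      rw [this, fou_zero_fn]
    · left; exact (balanced_iff_fou hn _).mp hb
  have hnonneg : ∀ a ∈ (univ : Finset (BV n)), 0 ≤ fou (bderiv g a) := by
    intro a _
    rcases hmem a with h | h <;> rw [h] <;> positivity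
  have h0 : fou (bderiv g 0) = 2 ^ n := by rw [bderiv_zero, fou_zero_fn]
  have hsplit : fou g ^ 2 = 2 ^ n + ∑ a ∈ univ.erase 0, fou (bderiv g a) := by
    rw [fou_sq, ← Finset.add_sum_erase _ _ (Finset.mem_univ 0), h0]
  constructor
  · rw [hsplit]
    have : 0 ≤ ∑ a ∈ univ.erase 0, fou (bderiv g a) :=
      Finset.sum_nonneg fun a ha => hnonneg a (Finset.mem_univ a)
    linarith
  · constructor
    · intro heq a ha
      have hsum0 : ∑ a ∈ univ.erase 0, fou (bderiv g a) = 0 := by linarith [hsplit.symm.trans heq]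
      have := (Finset.sum_eq_zero_iff_of_nonneg
        (fun a ha => hnonneg a (Finset.mem_univ a))).mp hsum0 a
        (Finset.mem_erase.mpr ⟨ha, Finset.mem_univ a⟩)
      exact (balanced_iff_fou hn _).mpr this
    · intro hb
      rw [hsplit, Finset.sum_eq_zero, add_zero]
      intro a ha
      exact (balanced_iff_fou hn _).mp (hb a (Finset.mem_erase.mp ha).1)

lemma sum_chi_dot {m : ℕ} (v : BV m) :
    ∑ l : BV m, chi (∑ i, l i * v i) = if v = 0 then 2 ^ m else 0 := by
  have h1 : ∀ l : BV m, chi (∑ i, l i * v i) = ∏ i, chi (l i * v i) := fun l =>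
    chi_sum _ _
  rw [Finset.sum_congr rfl fun l _ => h1 l]
  have h2 := Finset.prod_univ_sum (fun _ : Fin m => (univ : Finset (ZMod 2)))
    (fun i b => chi (b * v i))
  rw [Fintype.piFinset_univ] at h2
  rw [← h2]
  have h3 : ∀ c : ZMod 2, (∑ b : ZMod 2, chi (b * c)) = if c = 0 then 2 else 0 := by decide
  rw [Finset.prod_congr rfl fun i _ => h3 (v i)]
  by_cases hv : v = 0
  · rw [if_pos hv]
    have : ∀ i : Fin m, (if v i = 0 then (2:ℤ) else 0) = 2 := fun i => by
      have h : v i = 0 := congrFun hv i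
      rw [if_pos h]
    rw [Finset.prod_congr rfl fun i _ => this i, Finset.prod_const]
    simp
  · rw [if_neg hv]
    obtain ⟨i, hi⟩ : ∃ i, v i ≠ 0 := by
      by_contra h; push_neg at h; exact hv (funext h)
    exact Finset.prod_eq_zero (Finset.mem_univ i) (by rw [if_neg hi])

lemma sum_fou_sq {n m : ℕ} (F : BV n → BV m) (hF : Function.Injective F) :
    ∑ l : BV m, fou (cmpnt F l) ^ 2 = 2 ^ (m + n) := by
  have hdot : ∀ (l : BV m) (x y : BV n),
      chi (cmpnt F l x) * chi (cmpnt F l y) = chi (∑ i, l i * (F x + F y) i) := by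
    intro l x y
    simp only [cmpnt]
    rw [← chi_add, ← Finset.sum_add_distrib]
    congr 1
    exact Finset.sum_congr rfl fun i _ => by simp [Pi.add_apply, mul_add]
  have hzero : ∀ x y : BV n, (F x + F y = 0) ↔ F x = F y := by
    intro x y
    have key : ∀ p q : ZMod 2, p + q = 0 ↔ p = q := by decide
    constructor
    · intro h; funext i; exact (key _ _).mp (congrFun h i)
    · intro h; funext i; exact (key _ _).mpr (congrFun h i)
  calc ∑ l : BV m, fou (cmpnt F l) ^ 2
      = ∑ l : BV m, ∑ x : BV n, ∑ y : BV n, chi (cmpnt F l x) * chi (cmpnt F l y) := by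
        refine Finset.sum_congr rfl fun l _ => ?_
        rw [sq, fou_def, Finset.sum_mul_sum]
    _ = ∑ x : BV n, ∑ l : BV m, ∑ y : BV n, chi (cmpnt F l x) * chi (cmpnt F l y) :=
        Finset.sum_comm
    _ = ∑ x : BV n, ∑ y : BV n, ∑ l : BV m, chi (cmpnt F l x) * chi (cmpnt F l y) :=
        Finset.sum_congr rfl fun x _ => Finset.sum_comm
    _ = ∑ x : BV n, ∑ y : BV n, (if F x = F y then (2:ℤ) ^ m else 0) := by
        refine Finset.sum_congr rfl fun x _ => Finset.sum_congr rfl fun y _ => ?_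
        rw [Finset.sum_congr rfl fun l _ => hdot l x y, sum_chi_dot]
        simp [hzero x y]
    _ = ∑ x : BV n, (2:ℤ) ^ m := by
        refine Finset.sum_congr rfl fun x _ => ?_
        have : ∀ y : BV n, (if F x = F y then (2:ℤ)^m else 0) = if x = y then (2:ℤ)^m else 0 :=
          fun y => by simp [hF.eq_iff]
        rw [Finset.sum_congr rfl fun y _ => this y, Finset.sum_ite_eq]
        simp
    _ = 2 ^ (m + n) := by
        rw [Finset.sum_const, Finset.card_univ]
        simp [Fintype.card_fun, pow_add]
        ring


/-- main theorem -/
theorem least_balanced_components_even (n m : ℕ) (hev : Even n) (hn : 1 ≤ n)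
    (hnm : n + 1 ≤ m) (F : BV n → BV m) (hF : Function.Injective F)
    (hpb : ∀ l : BV m, l ≠ 0 → ∀ a : BV n,
      (∃ c, ∀ x, bderiv (cmpnt F l) a x = c) ∨ IsBalanced (bderiv (cmpnt F l) a)) :
    2 ^ n - 1 ≤ {l : BV m | IsBalanced (cmpnt F l)}.ncard
    ∧ ({l : BV m | IsBalanced (cmpnt F l)}.ncard = 2 ^ n - 1 ↔
        ∀ l : BV m, l ≠ 0 → ¬ IsBalanced (cmpnt F l) →
          ∀ a : BV n, a ≠ 0 → IsBalanced (bderiv (cmpnt F l) a)) := by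
  classical
  set g : BV m → ℤ := fun l => fou (cmpnt F l) ^ 2 with hg
  set K : Finset (BV m) := univ.filter (fun l => IsBalanced (cmpnt F l)) with hK
  set U : Finset (BV m) :=
    (univ.filter (fun l => ¬ IsBalanced (cmpnt F l))).erase 0 with hU
  have hncard : {l : BV m | IsBalanced (cmpnt F l)}.ncard = K.card := by
    rw [Set.ncard_eq_toFinset_card']
    simp [Set.toFinset_setOf, hK]
  have hc0 : cmpnt F (0 : BV m) = fun _ => 0 := by
    funext x; simp [cmpnt]
  have h0P : ¬ IsBalanced (cmpnt F (0 : BV m)) := by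
    intro h
    rw [IsBalanced, bwt_eq, hc0] at h
    simp at h
    exact absurd h.symm (Nat.pow_pos (by norm_num)).ne'
  have hUmem : ∀ l ∈ U, l ≠ 0 ∧ ¬ IsBalanced (cmpnt F l) := by
    intro l hl
    rw [hU, Finset.mem_erase, Finset.mem_filter] at hl
    exact ⟨hl.1, hl.2.2⟩
  have hkey : ∀ l ∈ U, (2:ℤ) ^ n ≤ g l ∧
      (g l = 2 ^ n ↔ ∀ a : BV n, a ≠ 0 → IsBalanced (bderiv (cmpnt F l) a)) :=
    fun l hl => unbal_main hn _ (hUmem l hl).2 (hpb l (hUmem l hl).1)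
  -- sum over U
  have h0mem : (0 : BV m) ∈ univ.filter (fun l => ¬ IsBalanced (cmpnt F l)) := by
    simp [h0P]
  have hUsum : ∑ l ∈ U, g l = 2 ^ (m + n) - (2 ^ n) ^ 2 := by
    have htot := sum_fou_sq F hF
    have hsplit := Finset.sum_filter_add_sum_filter_not (univ : Finset (BV m))
      (fun l => IsBalanced (cmpnt F l)) g
    have hKzero : ∑ l ∈ K, g l = 0 := by
      apply Finset.sum_eq_zero
      intro l hl
      rw [hK, Finset.mem_filter] at hl
      have := (balanced_iff_fou hn _).mp hl.2
      simp [hg, this]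
    have herase := Finset.add_sum_erase _ g h0mem
    have hg0 : g 0 = (2 ^ n) ^ 2 := by simp [hg, hc0, fou_zero_fn]
    have : ∑ l : BV m, g l = 2 ^ (m + n) := htot
    rw [← hsplit, hKzero, zero_add, ← herase, hg0] at this
    rw [hU]
    linarith
  -- cardinalities
  have hcards : K.card + (U.card + 1) = 2 ^ m := by
    have h1 := Finset.card_filter_add_card_filter_not
      (s := (univ : Finset (BV m))) (p := fun l => IsBalanced (cmpnt F l))
    have h2 := Finset.card_erase_add_one h0mem
    rw [Finset.card_univ] at h1
    simp only [Fintype.card_fun, ZMod.card, Fintype.card_fin] at h1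
    rw [← hK] at h1
    rw [← h2] at h1
    rw [← h1, hU]
  have hlow : ∀ l ∈ U, (2:ℤ) ^ n ≤ g l := fun l hl => (hkey l hl).1
  have hUb : (U.card : ℤ) * 2 ^ n ≤ 2 ^ (m + n) - (2 ^ n) ^ 2 := by
    have := Finset.card_nsmul_le_sum U g (2 ^ n) hlow
    rw [nsmul_eq_mul] at this
    linarith [hUsum]
  have hpowpos : (0:ℤ) < 2 ^ n := by positivity
  have hfact : (2:ℤ) ^ (m + n) - (2 ^ n) ^ 2 = (2 ^ m - 2 ^ n) * 2 ^ n := by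
    rw [pow_add]; ring
  have hUcard : (U.card : ℤ) ≤ 2 ^ m - 2 ^ n := by
    rw [hfact] at hUb
    exact le_of_mul_le_mul_right hUb hpowpos
  have hcardsZ : (K.card : ℤ) + U.card + 1 = 2 ^ m := by
    have := congrArg (Nat.cast : ℕ → ℤ) hcards
    push_cast at this
    linarith
  have hn1 : 1 ≤ 2 ^ n := Nat.one_le_two_pow
  constructor
  · rw [hncard]
    zify [hn1]
    linarith
  · rw [hncard]
    constructor
    · intro hc hl hl0 hlb a ha
      have hcZ : (K.card : ℤ) = 2 ^ n - 1 := by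
        zify [hn1] at hc; linarith
      have hUeq : (U.card : ℤ) = 2 ^ m - 2 ^ n := by linarith
      have hzero : ∑ l ∈ U, (g l - 2 ^ n) = 0 := by
        rw [Finset.sum_sub_distrib, Finset.sum_const, nsmul_eq_mul, hUsum, hfact, hUeq]
        ring
      have hall := (Finset.sum_eq_zero_iff_of_nonneg
        (fun l hlm => by linarith [hlow l hlm])).mp hzero
      have hlU : hl ∈ U := by
        rw [hU, Finset.mem_erase, Finset.mem_filter]
        exact ⟨hl0, Finset.mem_univ _, hlb⟩
      have : g hl = 2 ^ n := by linarith [hall hl hlU]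
      exact ((hkey hl hlU).2.mp this) a ha
    · intro hrhs
      have hall : ∀ l ∈ U, g l = 2 ^ n := by
        intro l hl
        exact (hkey l hl).2.mpr (hrhs l (hUmem l hl).1 (hUmem l hl).2)
      have hsum : ∑ l ∈ U, g l = (U.card : ℤ) * 2 ^ n := by
        rw [Finset.sum_congr rfl hall, Finset.sum_const, nsmul_eq_mul]
      have hUeq : (U.card : ℤ) = 2 ^ m - 2 ^ n := by
        have : (U.card : ℤ) * 2 ^ n = (2 ^ m - 2 ^ n) * 2 ^ n := by
          rw [← hsum, hUsum, hfact]
        exact mul_right_cancel₀ hpowpos.ne' this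
      have hcZ : (K.card : ℤ) = 2 ^ n - 1 := by linarith
      zify [hn1]
      linarith
end
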